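/- Let A be a connected finite graph with diameter less than D, A' a proper subgraph of A, and u a vertex of A' maximizing the number of vertices of the depth-D truncated universal cover U^D_{A',u}. Then U^D_{A,u} has strictly more vertices than U^D_{A',w} for every vertex w of A'. -/

import Mathlib

/-- `l` is a non-backtracking walk in `G` starting at `x`. -/
def IsNBWalk {V : Type*} (G : SimpleGraph V) (x : V) (l : List V) : Prop :=
  l ≠ [] ∧ l.head? = some x ∧ l.Chain' G.Adj ∧
    ∀ i : ℕ, (h : i + 2 < l.length) → l[i]'(by omega) ≠ l[i + 2]'h

/-- Vertices of the universal cover of `G` rooted at `x`, truncated at depth `r`: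
non-backtracking walks from `x` with at most `r` edges. -/
def TruncCover {V : Type*} (G : SimpleGraph V) (x : V) (r : ℕ) : Type _ :=
  {l : List V // IsNBWalk G x l ∧ l.length ≤ r + 1}

open SimpleGraph

lemma finite_truncCover {V : Type*} [Finite V] (G : SimpleGraph V) (x : V) (r : ℕ) :
    Finite (TruncCover G x r) := by
  have h1 : Finite {l : List V // l.length ≤ r + 1} :=
    (List.finite_length_le (α := V) (n := r + 1)).to_subtype
  exact Finite.of_injective
    (fun s : TruncCover G x r => (⟨s.val, s.2.2⟩ : {l : List V // l.length ≤ r + 1}))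
    (fun a b hab => Subtype.ext (by simpa using congrArg Subtype.val hab))

lemma nb_of_path {V : Type*} {G : SimpleGraph V} {x y : V} (p : G.Walk x y)
    (hp : p.IsPath) : IsNBWalk G x p.support := by
  refine ⟨p.support_ne_nil, ?_, p.isChain_adj_support, ?_⟩
  · rw [p.support_eq_cons]; rfl
  · intro i h he
    have hn := hp.support_nodup
    have := (hn.getElem_inj_iff (hi := by omega) (hj := h)).mp he
    omega

lemma one_le_length_of_ne {V : Type*} {G : SimpleGraph V} {x y : V}
    (w : G.Walk x y) (h : x ≠ y) : 1 ≤ w.length := by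
  cases w with
  | nil => exact absurd rfl h
  | cons _ _ => simp [Walk.length_cons]

theorem stmt_13 {V : Type*} [Fintype V] (A : SimpleGraph V) (hA : A.Connected)
    (D : ℕ) (hD : A.diam < D)
    (A' : A.Subgraph) (hprop : A' ≠ ⊤) (u : A'.verts)
    (hmax : ∀ w : A'.verts,
      Nat.card (TruncCover A'.coe w D) ≤ Nat.card (TruncCover A'.coe u D)) :
    ∀ w : A'.verts,
      Nat.card (TruncCover A'.coe w D) < Nat.card (TruncCover A (u : V) D) := by
  classical
  have hne : Nonempty V := hA.nonempty
  -- the ediam is finite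
  have hnetop : A.ediam ≠ ⊤ := by
    obtain ⟨a, b, hab⟩ := exists_edist_eq_ediam_of_finite (G := A)
    rw [← hab]
    exact edist_ne_top_iff_reachable.mpr (hA.preconnected a b)
  have hdist : ∀ v : V, A.dist (↑u) v < D :=
    fun v => lt_of_le_of_lt (dist_le_diam hnetop) hD
  -- A' misses a vertex or an edge
  have hmiss : (∃ v, v ∉ A'.verts) ∨ ∃ a b, A.Adj a b ∧ ¬ A'.Adj a b := by
    by_contra hc
    push_neg at hc
    obtain ⟨h1, h2⟩ := hc
    apply hprop
    ext x y
    · simp [h1 x]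
    · simp only [Subgraph.top_adj]
      exact ⟨fun h => h.adj_sub, fun h => h2 x y h⟩
  -- a witness element of TruncCover A u D not in the image
  have hwit : ∃ t : TruncCover A (↑u : V) D,
      ∀ s : TruncCover A'.coe u D, t.val ≠ s.val.map Subtype.val := by
    rcases hmiss with ⟨v, hv⟩ | ⟨a, b, hadj, hnadj⟩
    · obtain ⟨p, hpath, hlen⟩ := hA.exists_path_of_dist (↑u) v
      refine ⟨⟨p.support, nb_of_path p hpath, ?_⟩, ?_⟩
      · rw [Walk.length_support, hlen]
        have := hdist v; omega
      · intro s hs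
        have hs' : p.support = s.val.map Subtype.val := hs
        have hvmem : v ∈ p.support := p.end_mem_support
        rw [hs'] at hvmem
        obtain ⟨x, _, hx⟩ := List.mem_map.mp hvmem
        exact hv (hx ▸ x.2)
    · -- orient so that dist u b ≤ dist u a
      have key : ∀ a b : V, A.Adj b a → ¬ A'.Adj b a → A.dist ↑u b ≤ A.dist ↑u a →
          ∃ t : TruncCover A (↑u : V) D,
            ∀ s : TruncCover A'.coe u D, t.val ≠ s.val.map Subtype.val := by
        intro a b hadj hnadj hba
        obtain ⟨p, hpath, hlen⟩ := hA.exists_path_of_dist (↑u) b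
        set q := p.concat hadj with hq
        have hqs : q.support = p.support ++ [a] := by
          rw [hq, Walk.support_concat]
        have hlsup : p.support.length = p.length + 1 := Walk.length_support p
        have hnodup := hpath.support_nodup
        have hNB : IsNBWalk A (↑u) q.support := by
          refine ⟨q.support_ne_nil, ?_, q.isChain_adj_support, ?_⟩
          · rw [q.support_eq_cons]; rfl
          · intro i h he
            rw [hqs, List.length_append, List.length_singleton, hlsup] at h
            have he : (p.support ++ [a])[i]'(by
                  simp only [List.length_append, List.length_singleton]; omega) =
                (p.support ++ [a])[i+2]'(by
                  simp only [List.length_append, List.length_singleton]; omega) := by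
              simp only [← hqs]; exact he
            by_cases hi2 : i + 2 < p.support.length
            · rw [List.getElem_append_left (by omega),
                List.getElem_append_left hi2] at he
              have := (hnodup.getElem_inj_iff (hi := by omega) (hj := hi2)).mp he
              omega
            · -- i + 2 = p.support.length, last element is a
              have hieq : i + 2 = p.support.length := by omega
              have hplen : 1 ≤ p.length := by omega
              have hlast : (p.support ++ [a])[i+2]'(by simp; omega) = a := by
                rw [List.getElem_append_right (by omega)]
                simp [hieq]
              rw [List.getElem_append_left (by omega), hlast] at he
              -- he : p.support[i] = a, with i = p.length - 1
              set c := p.support[i]'(by omega) with hc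
              have hcb : c ≠ b := by
                intro hcontra
                have hbidx : p.support[p.support.length - 1]'(by omega) = b := by
                  have := p.getLast_support
                  rwa [List.getLast_eq_getElem] at this
                rw [← hbidx] at hcontra
                have := (hnodup.getElem_inj_iff (hi := by omega)
                  (hj := by omega)).mp hcontra
                omega
              have hcmem : c ∈ p.support := List.getElem_mem _
              have hsplit := p.take_spec hcmem
              have hlen2 : (p.takeUntil c hcmem).length +
                  (p.dropUntil c hcmem).length = p.length := by
                have := congrArg Walk.length hsplit
                rwa [Walk.length_append] at this
              have hdrop : 1 ≤ (p.dropUntil c hcmem).length :=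
                one_le_length_of_ne _ hcb
              have htk : (p.takeUntil c hcmem).length ≤ p.length - 1 := by omega
              have hdc : A.dist ↑u c ≤ p.length - 1 :=
                le_trans (dist_le _) htk
              rw [he] at hdc
              have : A.dist ↑u b ≤ A.dist ↑u a := hba
              omega
        refine ⟨⟨q.support, hNB, ?_⟩, ?_⟩
        · rw [hqs, List.length_append, List.length_singleton, hlsup, hlen]
          have := hdist b; omega
        · intro s hs
          have hs' : q.support = s.val.map Subtype.val := hs
          have hchain : List.Chain' (fun x y : V => A'.Adj x y)
              (s.val.map Subtype.val) := by
            unfold List.Chain'; rw [List.isChain_map]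
            have := s.2.1.2.2.1
            exact List.IsChain.imp (fun x y hxy => by simpa using hxy) this
          unfold List.Chain' at hchain; rw [← hs', hqs, List.isChain_append] at hchain
          obtain ⟨-, -, h3⟩ := hchain
          have hgl : p.support.getLast? = some b := by
            rw [List.getLast?_eq_getLast_of_ne_nil p.support_ne_nil,
              p.getLast_support]
          exact hnadj (h3 b hgl a rfl)
      rcases le_total (A.dist ↑u b) (A.dist ↑u a) with h | h
      · exact key a b hadj.symm (fun h' => hnadj h'.symm) h
      · exact key b a hadj hnadj h
  obtain ⟨t, ht⟩ := hwit
  intro w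
  refine lt_of_le_of_lt (hmax w) ?_
  haveI := finite_truncCover A'.coe (u : A'.verts) D
  haveI := finite_truncCover A (↑u : V) D
  haveI : Fintype (TruncCover A'.coe u D) := Fintype.ofFinite _
  haveI : Fintype (TruncCover A (↑u : V) D) := Fintype.ofFinite _
  rw [Nat.card_eq_fintype_card, Nat.card_eq_fintype_card]
  -- the injection
  have hmap : ∀ s : TruncCover A'.coe u D,
      IsNBWalk A (↑u) (s.val.map Subtype.val) ∧ (s.val.map Subtype.val).length ≤ D + 1 := by
    intro s
    obtain ⟨⟨hne', hhd, hch, hnb⟩, hlen⟩ := s.2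
    refine ⟨⟨fun h => hne' (List.map_eq_nil_iff.mp h), ?_, ?_, ?_⟩,
      by rw [List.length_map]; exact hlen⟩
    · rw [List.head?_map, hhd]; rfl
    · unfold List.Chain'; rw [List.isChain_map]
      exact List.IsChain.imp (fun x y hxy => Subgraph.Adj.adj_sub (by simpa using hxy)) hch
    · intro i h he
      rw [List.length_map] at h
      rw [List.getElem_map, List.getElem_map] at he
      exact hnb i h (Subtype.val_injective he)
  let f : TruncCover A'.coe u D → TruncCover A (↑u : V) D :=
    fun s => ⟨s.val.map Subtype.val, hmap s⟩
  have hinj : Function.Injective f := fun s₁ s₂ h =>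
    Subtype.ext (List.map_injective_iff.mpr Subtype.val_injective
      (congrArg Subtype.val h))
  have hnmem : t ∉ Set.range f := by
    rintro ⟨s, hsf⟩
    exact ht s (congrArg Subtype.val hsf).symm
  exact Fintype.card_lt_of_injective_of_notMem f hinj hnmem
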